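/- Let δ > 0 and let A, B, K₂, K₁ : I → ℝ be differentiable functions on a real interval I with K₂(t) ≠ 0 for all t ∈ I, satisfying K₂' + 4A·K₂ - 2δ²·K₂² = 0 and K₁' + 2A·K₁ - 2δ²·K₁·K₂ + 2B·K₂ = 0 on I. Define Q(t) = -K₁(t)/(2·K₂(t)). Then Q is differentiable and satisfies Q'(t) = 2·Q(t)·A(t) + B(t) for all t ∈ I. -/

import Mathlib

/-- If `K₂, K₁` are differentiable on a real interval `I` with `K₂ ≠ 0`, satisfying
`K₂' + 4AK₂ - 2δ²K₂² = 0` and `K₁' + 2AK₁ - 2δ²K₁K₂ + 2BK₂ = 0` on `I`, then the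
position of the maximum `Q = -K₁/(2K₂)` of the Gaussian density is differentiable
and satisfies `Q' = 2QA + B` on `I`. -/
theorem maximum_position_ode
    (δ : ℝ) (hδ : 0 < δ) (I : Set ℝ) (hI : I.OrdConnected)
    (A B K₂ K₁ : ℝ → ℝ)
    (hK₂ne : ∀ t ∈ I, K₂ t ≠ 0)
    (hK₂ : ∀ t ∈ I,
      HasDerivAt K₂ (2 * δ ^ 2 * (K₂ t) ^ 2 - 4 * A t * K₂ t) t)
    (hK₁ : ∀ t ∈ I,
      HasDerivAt K₁ (2 * δ ^ 2 * K₁ t * K₂ t - 2 * A t * K₁ t - 2 * B t * K₂ t) t) :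
    ∀ t ∈ I, HasDerivAt (fun s => -K₁ s / (2 * K₂ s))
      (2 * (-K₁ t / (2 * K₂ t)) * A t + B t) t := by
  intro t ht
  have hne := hK₂ne t ht
  have hne2 : (2 : ℝ) * K₂ t ≠ 0 := by positivity
  have h := ((hK₁ t ht).neg).div ((hK₂ t ht).const_mul 2) hne2
  convert h using 1
  · rfl
  · rfl
  · rfl
  simp only [Pi.neg_apply]
  field_simp
  ring
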